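/- arXiv:2003.08719 — 5 statements merged into one kernel-verified Lean document; each statement's English description precedes it below -/
import Mathlib

section
/- Let Q be a symmetric n×n real matrix, s, α ∈ ℝⁿ, g = Qα − s, and let d, p_prev ∈ ℝⁿ satisfy the first orthogonality condition gᵀp_prev = 0. Let γ ∈ ℝ, p = d + γ p_prev, and suppose pᵀQp > 0. Then for ρ* = −(gᵀd)/(pᵀQp), the decrease of the dual objective is Θ(α) − Θ(α + ρ*p) = (1/2)(gᵀd)²/(pᵀQp). If moreover p_prevᵀQp_prev > 0, dᵀQd > 0 and γ = −(dᵀQp_prev)/(p_prevᵀQp_prev), this decrease equals (1/2)(gᵀd)² / ( ‖d‖²_Q (1 − (dᵀQp_prev)²/(‖d‖²_Q ‖p_prev‖²_Q)) ). -/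
open Matrix

/-- With g = Qα − s, first orthogonality gᵀp_prev = 0, p = d + γ p_prev and
pᵀQp > 0, the step ρ* = −(gᵀd)/(pᵀQp) yields Θ(α) − Θ(α + ρ*p) = (1/2)(gᵀd)²/(pᵀQp);
with the conjugate choice of γ this equals
(1/2)(gᵀd)² / (‖d‖²_Q (1 − (dᵀQp_prev)²/(‖d‖²_Q ‖p_prev‖²_Q))). -/
theorem csmo_unclipped_gain
    {n : ℕ} (Q : Matrix (Fin n) (Fin n) ℝ) (hQ : Q.IsSymm)
    (s α : Fin n → ℝ)
    (Θ : (Fin n → ℝ) → ℝ)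
    (hΘ : ∀ β, Θ β = (1 / 2) * (β ⬝ᵥ Q.mulVec β) - s ⬝ᵥ β)
    (g : Fin n → ℝ) (hg : g = Q.mulVec α - s)
    (d pprev : Fin n → ℝ) (horth : g ⬝ᵥ pprev = 0)
    (γ : ℝ) (p : Fin n → ℝ) (hp : p = d + γ • pprev)
    (hpQp : 0 < p ⬝ᵥ Q.mulVec p)
    (ρstar : ℝ) (hρ : ρstar = -(g ⬝ᵥ d) / (p ⬝ᵥ Q.mulVec p)) :
    Θ α - Θ (α + ρstar • p) = (1 / 2) * (g ⬝ᵥ d) ^ 2 / (p ⬝ᵥ Q.mulVec p) ∧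
    (0 < pprev ⬝ᵥ Q.mulVec pprev → 0 < d ⬝ᵥ Q.mulVec d →
      γ = -(d ⬝ᵥ Q.mulVec pprev) / (pprev ⬝ᵥ Q.mulVec pprev) →
      Θ α - Θ (α + ρstar • p) =
        (1 / 2) * (g ⬝ᵥ d) ^ 2 /
          ((d ⬝ᵥ Q.mulVec d) *
            (1 - (d ⬝ᵥ Q.mulVec pprev) ^ 2 /
              ((d ⬝ᵥ Q.mulVec d) * (pprev ⬝ᵥ Q.mulVec pprev))))) := by
  have hsym : ∀ x y : Fin n → ℝ, x ⬝ᵥ Q.mulVec y = y ⬝ᵥ Q.mulVec x := by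
    intro x y
    rw [Matrix.dotProduct_mulVec, ← Matrix.mulVec_transpose, hQ.eq, dotProduct_comm]
  have hgp : g ⬝ᵥ p = g ⬝ᵥ d := by
    rw [hp]
    simp [dotProduct_add, dotProduct_smul, horth]
  have h2 : p ⬝ᵥ Q.mulVec α = g ⬝ᵥ d + s ⬝ᵥ p := by
    rw [← hgp, hg, sub_dotProduct, dotProduct_comm]
    ring
  have hΘdiff : Θ α - Θ (α + ρstar • p)
      = -(ρstar * (g ⬝ᵥ d)) - ρstar ^ 2 / 2 * (p ⬝ᵥ Q.mulVec p) := by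
    rw [hΘ, hΘ]
    have h1 : (α + ρstar • p) ⬝ᵥ Q.mulVec (α + ρstar • p)
        = α ⬝ᵥ Q.mulVec α + 2 * ρstar * (p ⬝ᵥ Q.mulVec α)
          + ρstar ^ 2 * (p ⬝ᵥ Q.mulVec p) := by
      simp only [Matrix.mulVec_add, Matrix.mulVec_smul, dotProduct_add, add_dotProduct,
        dotProduct_smul, smul_dotProduct, smul_eq_mul]
      rw [hsym α p]
      ring
    rw [h1, dotProduct_add, dotProduct_smul, h2, smul_eq_mul]
    ring
  have hne : (p ⬝ᵥ Q.mulVec p) ≠ 0 := ne_of_gt hpQp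
  have hmain : Θ α - Θ (α + ρstar • p) = (1 / 2) * (g ⬝ᵥ d) ^ 2 / (p ⬝ᵥ Q.mulVec p) := by
    rw [hΘdiff, hρ]
    field_simp
    ring
  refine ⟨hmain, fun hb ha hγ => ?_⟩
  have hexp : p ⬝ᵥ Q.mulVec p
      = d ⬝ᵥ Q.mulVec d + 2 * γ * (d ⬝ᵥ Q.mulVec pprev)
        + γ ^ 2 * (pprev ⬝ᵥ Q.mulVec pprev) := by
    have := hsym pprev d
    rw [hp]
    simp only [Matrix.mulVec_add, Matrix.mulVec_smul, dotProduct_add, add_dotProduct,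
      dotProduct_smul, smul_dotProduct, smul_eq_mul]
    rw [this]; ring
  have hbne : (pprev ⬝ᵥ Q.mulVec pprev) ≠ 0 := ne_of_gt hb
  have hane : (d ⬝ᵥ Q.mulVec d) ≠ 0 := ne_of_gt ha
  have hden : (d ⬝ᵥ Q.mulVec d) * (1 - (d ⬝ᵥ Q.mulVec pprev) ^ 2 /
      ((d ⬝ᵥ Q.mulVec d) * (pprev ⬝ᵥ Q.mulVec pprev))) = p ⬝ᵥ Q.mulVec p := by
    rw [hexp, hγ]
    field_simp
    ring
  rw [hmain, hden]
end

section
/- Let Q be a symmetric positive semidefinite n×n real matrix and d, p ∈ ℝⁿ with dᵀQd > 0 and pᵀQp > 0, let γ* = −(dᵀQp)/(pᵀQp) and p' = d + γ*p, and assume p'ᵀQp' > 0. Then for every real number g_d, the unclipped conjugate SMO gain is at least the unclipped SMO gain: (1/2) g_d² / (p'ᵀQp') ≥ (1/2) g_d² / (dᵀQd). -/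
open Matrix

/-- For Q symmetric PSD with dᵀQd > 0, pᵀQp > 0, γ* = −(dᵀQp)/(pᵀQp),
p' = d + γ*p and p'ᵀQp' > 0, for every real g_d the unclipped conjugate SMO gain is
at least the unclipped SMO gain: (1/2) g_d²/(p'ᵀQp') ≥ (1/2) g_d²/(dᵀQd). -/
theorem csmo_gain_ge_smo_gain
    {n : ℕ} (Q : Matrix (Fin n) (Fin n) ℝ) (hQ : Q.PosSemidef)
    (d p : Fin n → ℝ) (hd : 0 < d ⬝ᵥ Q.mulVec d) (hp : 0 < p ⬝ᵥ Q.mulVec p)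
    (γstar : ℝ) (hγ : γstar = -(d ⬝ᵥ Q.mulVec p) / (p ⬝ᵥ Q.mulVec p))
    (p' : Fin n → ℝ) (hp' : p' = d + γstar • p)
    (hp'Qp' : 0 < p' ⬝ᵥ Q.mulVec p') :
    ∀ gd : ℝ,
      (1 / 2) * gd ^ 2 / (p' ⬝ᵥ Q.mulVec p') ≥ (1 / 2) * gd ^ 2 / (d ⬝ᵥ Q.mulVec d) := by
  intro gd
  have hQt : Qᵀ = Q := by
    have h := hQ.1.eq
    rwa [Matrix.conjTranspose_eq_transpose_of_trivial] at h
  have hsym : p ⬝ᵥ Q.mulVec d = d ⬝ᵥ Q.mulVec p := by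
    rw [Matrix.dotProduct_mulVec, ← Matrix.mulVec_transpose, hQt, dotProduct_comm]
  have hexp : p' ⬝ᵥ Q.mulVec p'
      = d ⬝ᵥ Q.mulVec d + 2 * γstar * (d ⬝ᵥ Q.mulVec p)
        + γstar ^ 2 * (p ⬝ᵥ Q.mulVec p) := by
    subst hp'
    simp [Matrix.mulVec_add, Matrix.mulVec_smul, dotProduct_add, add_dotProduct,
      smul_dotProduct, dotProduct_smul, hsym]
    ring
  have hγc : γstar * (p ⬝ᵥ Q.mulVec p) = -(d ⬝ᵥ Q.mulVec p) := by
    rw [hγ]; field_simp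
  have hle : p' ⬝ᵥ Q.mulVec p' ≤ d ⬝ᵥ Q.mulVec d := by
    rw [hexp]
    nlinarith [hp, hγc, sq_nonneg (d ⬝ᵥ Q.mulVec p), sq_nonneg γstar,
      mul_pos hp hp]
  apply div_le_div_of_nonneg_left _ hp'Qp' hle
  positivity
end

section
/- Let Q be a symmetric positive semidefinite n×n real matrix, s ∈ ℝⁿ, C > 0, y ∈ ℝⁿ with y_i ∈ {−1, 1}, and let F = {α ∈ ℝⁿ : 0 ≤ α_i ≤ C for all i, and Σᵢ y_i α_i = 0}. A point α ∈ F minimizes Θ over F if and only if for every l ∈ I_L(α) and every u ∈ I_U(α) one has y_u (Qα − s)_u ≤ y_l (Qα − s)_l, i.e., there is no violating pair at α. -/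
open Matrix

/-- For Q symmetric PSD, α in the feasible set F (box and equality
constraints) minimizes Θ over F iff there is no violating pair at α, i.e., for every
l ∈ I_L(α) and u ∈ I_U(α), y_u (Qα − s)_u ≤ y_l (Qα − s)_l. -/
theorem smo_optimality_no_violating_pair
    {n : ℕ} (Q : Matrix (Fin n) (Fin n) ℝ) (hQ : Q.PosSemidef)
    (s : Fin n → ℝ) (C : ℝ) (hC : 0 < C)
    (y : Fin n → ℝ) (hy : ∀ i, y i = 1 ∨ y i = -1)
    (Θ : (Fin n → ℝ) → ℝ)
    (hΘ : ∀ β, Θ β = (1 / 2) * (β ⬝ᵥ Q.mulVec β) - s ⬝ᵥ β)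
    (F : Set (Fin n → ℝ))
    (hF : F = {β | (∀ i, 0 ≤ β i ∧ β i ≤ C) ∧ ∑ i, y i * β i = 0})
    (α : Fin n → ℝ) (hα : α ∈ F) :
    (∀ β ∈ F, Θ α ≤ Θ β) ↔
      (∀ l u : Fin n,
        ((α l < C ∧ y l = 1) ∨ (0 < α l ∧ y l = -1)) →
        ((α u < C ∧ y u = -1) ∨ (0 < α u ∧ y u = 1)) →
        y u * (Q.mulVec α - s) u ≤ y l * (Q.mulVec α - s) l) := by
  subst hF
  obtain ⟨hbox, hsum⟩ := hα
  have hsym : ∀ v w : Fin n → ℝ, v ⬝ᵥ Q.mulVec w = w ⬝ᵥ Q.mulVec v := by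
    intro v w
    have hs : Qᵀ = Q := by
      have := hQ.1
      simpa [Matrix.IsHermitian, Matrix.conjTranspose_eq_transpose_of_trivial] using this
    rw [Matrix.dotProduct_mulVec, ← Matrix.mulVec_transpose, hs, dotProduct_comm]
  have hpsd : ∀ v : Fin n → ℝ, 0 ≤ v ⬝ᵥ Q.mulVec v := fun v => by simpa using hQ.dotProduct_mulVec_nonneg v
  set g : Fin n → ℝ := Q.mulVec α - s with hg
  -- second-order expansion of Θ around α
  have key : ∀ β : Fin n → ℝ, Θ β =
      Θ α + (β - α) ⬝ᵥ g + (1 / 2) * ((β - α) ⬝ᵥ Q.mulVec (β - α)) := by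
    intro β
    have e2 : (β - α) ⬝ᵥ Q.mulVec (β - α)
        = β ⬝ᵥ Q.mulVec β - β ⬝ᵥ Q.mulVec α - (α ⬝ᵥ Q.mulVec β - α ⬝ᵥ Q.mulVec α) := by
      simp [sub_dotProduct, Matrix.mulVec_sub, dotProduct_sub]; ring
    have e1 : (β - α) ⬝ᵥ g = β ⬝ᵥ Q.mulVec α - β ⬝ᵥ s - (α ⬝ᵥ Q.mulVec α - α ⬝ᵥ s) := by
      simp [hg, sub_dotProduct, dotProduct_sub]; ring
    rw [hΘ, hΘ, e1, e2, hsym α β, dotProduct_comm s β, dotProduct_comm s α]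
    ring
  have hy2 : ∀ i, y i * y i = 1 := by
    intro i; rcases hy i with h | h <;> rw [h] <;> norm_num
  constructor
  · -- minimality → no violating pair
    intro hmin l u hl hu
    by_cases hlu : l = u
    · subst hlu; rfl
    by_contra hvp
    push_neg at hvp
    -- direction
    set d : Fin n → ℝ := fun i => if i = l then y l else if i = u then -y u else 0 with hd
    have hdg : d ⬝ᵥ g = y l * g l - y u * g u := by
      have : ∀ i, d i * g i =
          (if i = l then y l * g l else 0) + (if i = u then -(y u * g u) else 0) := by
        intro i
        rcases eq_or_ne i l with h1 | h1
        · subst h1; simp [hd, hlu]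
        · rcases eq_or_ne i u with h2 | h2
          · subst h2; simp [hd, h1]
          · simp [hd, h1, h2]
      simp [dotProduct, this, Finset.sum_add_distrib]
      ring
    have hdy : ∑ i, y i * d i = 0 := by
      have : ∀ i, y i * d i =
          (if i = l then y l * y l else 0) + (if i = u then -(y u * y u) else 0) := by
        intro i
        rcases eq_or_ne i l with h1 | h1
        · subst h1; simp [hd, hlu]
        · rcases eq_or_ne i u with h2 | h2
          · subst h2; simp [hd, h1]
          · simp [hd, h1, h2]
      simp [this, Finset.sum_add_distrib, hy2]
    set a : ℝ := y l * g l - y u * g u with ha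
    have haneg : a < 0 := by rw [ha]; linarith
    set b : ℝ := (1 / 2) * (d ⬝ᵥ Q.mulVec d) with hb
    have hbnn : 0 ≤ b := by
      have := hpsd d; rw [hb]; linarith
    -- step sizes
    have hstepl : ∃ t1 : ℝ, 0 < t1 ∧ ∀ t : ℝ, 0 < t → t ≤ t1 →
        0 ≤ α l + t * y l ∧ α l + t * y l ≤ C := by
      rcases hl with ⟨h1, h2⟩ | ⟨h1, h2⟩
      · exact ⟨C - α l, by linarith, fun t ht1 ht2 => by
          constructor <;> [nlinarith [(hbox l).1]; nlinarith]⟩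
      · exact ⟨α l, h1, fun t ht1 ht2 => by
          constructor <;> [nlinarith; nlinarith [(hbox l).2]]⟩
    have hstepu : ∃ t2 : ℝ, 0 < t2 ∧ ∀ t : ℝ, 0 < t → t ≤ t2 →
        0 ≤ α u + t * (-y u) ∧ α u + t * (-y u) ≤ C := by
      rcases hu with ⟨h1, h2⟩ | ⟨h1, h2⟩
      · exact ⟨C - α u, by linarith, fun t ht1 ht2 => by
          constructor <;> [nlinarith [(hbox u).1]; nlinarith]⟩
      · exact ⟨α u, h1, fun t ht1 ht2 => by
          constructor <;> [nlinarith; nlinarith [(hbox u).2]]⟩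
    obtain ⟨t1, ht1, hfl⟩ := hstepl
    obtain ⟨t2, ht2, hfu⟩ := hstepu
    set t0 : ℝ := min t1 t2 with ht0
    have ht0pos : 0 < t0 := lt_min ht1 ht2
    set t : ℝ := if b = 0 then t0 else min t0 ((-a) / (2 * b)) with ht
    have htpos : 0 < t := by
      rw [ht]; split
      · exact ht0pos
      · rename_i hb0
        have hbpos : 0 < b := lt_of_le_of_ne hbnn (Ne.symm hb0)
        exact lt_min ht0pos (div_pos (by linarith) (by linarith))
    have htle : t ≤ t0 := by
      rw [ht]; split
      · exact le_refl _
      · exact min_le_left _ _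
    have htneg : a * t + b * t ^ 2 < 0 := by
      rw [ht]; split
      · rename_i hb0
        rw [hb0]; simpa using mul_neg_of_neg_of_pos haneg ht0pos
      · rename_i hb0
        have hbpos : 0 < b := lt_of_le_of_ne hbnn (Ne.symm hb0)
        set t' : ℝ := min t0 ((-a) / (2 * b)) with ht'
        have ht'pos : 0 < t' := lt_min ht0pos (div_pos (by linarith) (by linarith))
        have h1 : t' ≤ (-a) / (2 * b) := min_le_right _ _
        have h2 : b * t' ≤ -a / 2 := by
          rw [le_div_iff₀ (by linarith : (0:ℝ) < 2 * b)] at h1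
          linarith
        nlinarith
    -- the perturbed point
    set β : Fin n → ℝ := fun i => α i + t * d i with hβ
    have hβF : β ∈ {β | (∀ i, 0 ≤ β i ∧ β i ≤ C) ∧ ∑ i, y i * β i = 0} := by
      constructor
      · intro i
        by_cases h1 : i = l
        · subst h1
          have := hfl t htpos (le_trans htle (min_le_left _ _))
          simpa [hβ, hd, hlu] using this
        · by_cases h2 : i = u
          · subst h2
            have := hfu t htpos (le_trans htle (min_le_right _ _))
            simpa [hβ, hd, h1] using this
          · simpa [hβ, hd, h1, h2] using hbox i
      · have : ∑ i, y i * β i = ∑ i, y i * α i + t * ∑ i, y i * d i := by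
          simp only [hβ]
          rw [Finset.mul_sum, ← Finset.sum_add_distrib]
          exact Finset.sum_congr rfl fun i _ => by ring
        rw [this, hsum, hdy]; ring
    have hβα : β - α = t • d := by
      funext i; simp [hβ, smul_eq_mul]
    have hΘβ : Θ β = Θ α + a * t + b * t ^ 2 := by
      rw [key β, hβα]
      rw [smul_dotProduct, Matrix.mulVec_smul, dotProduct_smul, hdg]
      simp [ha, hb, smul_eq_mul]; ring
    have := hmin β hβF
    rw [hΘβ] at this
    linarith
  · -- no violating pair → minimality
    intro hnvp β hβ
    obtain ⟨hboxβ, hsumβ⟩ := hβ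
    rw [key β]
    have hq : 0 ≤ (1 / 2) * ((β - α) ⬝ᵥ Q.mulVec (β - α)) := by
      have := hpsd (β - α); linarith
    have hlin : 0 ≤ (β - α) ⬝ᵥ g := by
      set c : Fin n → ℝ := fun i => y i * (β i - α i) with hc
      set h : Fin n → ℝ := fun i => y i * g i with hh
      have hrw : (β - α) ⬝ᵥ g = ∑ i, c i * h i := by
        apply Finset.sum_congr rfl
        intro i _
        rcases hy i with h1 | h1 <;> simp [hc, hh, h1] <;> ring
      have hcsum : ∑ i, c i = 0 := by
        simp only [hc, mul_sub]
        rw [Finset.sum_sub_distrib, hsumβ, hsum]; ring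
      have hmemL : ∀ i, 0 < c i → ((α i < C ∧ y i = 1) ∨ (0 < α i ∧ y i = -1)) := by
        intro i hci
        rcases hy i with h1 | h1
        · left; refine ⟨?_, h1⟩
          have : 0 < β i - α i := by
            simp only [hc, h1] at hci; linarith
          have := (hboxβ i).2
          linarith
        · right; refine ⟨?_, h1⟩
          have : β i - α i < 0 := by
            simp only [hc, h1] at hci; linarith
          have := (hboxβ i).1
          linarith
      have hmemU : ∀ i, c i < 0 → ((α i < C ∧ y i = -1) ∨ (0 < α i ∧ y i = 1)) := by
        intro i hci
        rcases hy i with h1 | h1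
        · right; refine ⟨?_, h1⟩
          have : β i - α i < 0 := by
            simp only [hc, h1] at hci; linarith
          have := (hboxβ i).1
          linarith
        · left; refine ⟨?_, h1⟩
          have : 0 < β i - α i := by
            simp only [hc, h1] at hci; linarith
          have := (hboxβ i).2
          linarith
      rw [hrw]
      by_cases hex : ∃ i, 0 < c i
      · obtain ⟨i0, hi0⟩ := hex
        set T : Finset (Fin n) := Finset.univ.filter (fun i => 0 < c i) with hT
        have hTne : T.Nonempty := ⟨i0, by simp [hT, hi0]⟩
        obtain ⟨l0, hl0T, hl0min⟩ := T.exists_min_image h hTne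
        have hl0c : 0 < c l0 := by simpa [hT] using hl0T
        set M : ℝ := h l0 with hM
        have hge : ∀ i, 0 < c i → M ≤ h i := by
          intro i hci
          exact hl0min i (by simp [hT, hci])
        have hle : ∀ i, c i < 0 → h i ≤ M := by
          intro i hci
          exact hnvp l0 i (hmemL l0 hl0c) (hmemU i hci)
        have hpt : ∀ i, c i * M ≤ c i * h i := by
          intro i
          rcases lt_trichotomy (c i) 0 with h' | h' | h'
          · exact mul_le_mul_of_nonpos_left (hle i h') (le_of_lt h')
          · simp [h']
          · exact mul_le_mul_of_nonneg_left (hge i h') (le_of_lt h')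
        calc (0:ℝ) = ∑ i, c i * M := by rw [← Finset.sum_mul, hcsum]; ring
          _ ≤ ∑ i, c i * h i := Finset.sum_le_sum (fun i _ => hpt i)
      · push_neg at hex
        have hall : ∀ i, c i = 0 := by
          intro i
          have h0 : ∑ j, -c j = 0 := by simp [Finset.sum_neg_distrib, hcsum]
          have := (Finset.sum_eq_zero_iff_of_nonneg
            (fun j _ => by simpa using hex j)).1 h0 i (Finset.mem_univ i)
          linarith [this]
        simp [hall]
    linarith
end

section
/- Let Q be a symmetric n×n real matrix, s ∈ ℝⁿ, C > 0, y ∈ ℝⁿ with y_i ∈ {−1, 1}, let α satisfy 0 ≤ α_i ≤ C for all i and Σᵢ y_i α_i = 0, and suppose l ∈ I_L(α), u ∈ I_U(α), l ≠ u, and y_u (Qα − s)_u − y_l (Qα − s)_l > 0. Set d = y_l e_l − y_u e_u. Then there exists ρ̄ > 0 such that for every ρ with 0 < ρ ≤ ρ̄, the point α + ρd satisfies 0 ≤ α_i + ρd_i ≤ C for all i, Σᵢ y_i (α_i + ρ d_i) = 0, and Θ(α + ρd) < Θ(α). -/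
open Matrix

/-- At a feasible α, if (l, u) is a violating pair (l ∈ I_L(α), u ∈ I_U(α),
l ≠ u, y_u (Qα − s)_u − y_l (Qα − s)_l > 0) and d = y_l e_l − y_u e_u, then there is
ρ̄ > 0 such that every step 0 < ρ ≤ ρ̄ keeps α + ρd feasible and strictly decreases Θ. -/
theorem violating_pair_gives_feasible_descent
    {n : ℕ} (Q : Matrix (Fin n) (Fin n) ℝ) (hQ : Q.IsSymm)
    (s : Fin n → ℝ) (C : ℝ) (hC : 0 < C)
    (y : Fin n → ℝ) (hy : ∀ i, y i = 1 ∨ y i = -1)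
    (Θ : (Fin n → ℝ) → ℝ)
    (hΘ : ∀ β, Θ β = (1 / 2) * (β ⬝ᵥ Q.mulVec β) - s ⬝ᵥ β)
    (α : Fin n → ℝ)
    (hbox : ∀ i, 0 ≤ α i ∧ α i ≤ C) (heq : ∑ i, y i * α i = 0)
    (l u : Fin n) (hlu : l ≠ u)
    (hl : (α l < C ∧ y l = 1) ∨ (0 < α l ∧ y l = -1))
    (hu : (α u < C ∧ y u = -1) ∨ (0 < α u ∧ y u = 1))
    (hviol : 0 < y u * (Q.mulVec α - s) u - y l * (Q.mulVec α - s) l)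
    (d : Fin n → ℝ)
    (hd : d = fun i => y l * (Pi.single l 1 : Fin n → ℝ) i
                      - y u * (Pi.single u 1 : Fin n → ℝ) i) :
    ∃ ρbar : ℝ, 0 < ρbar ∧ ∀ ρ : ℝ, 0 < ρ → ρ ≤ ρbar →
      (∀ i, 0 ≤ α i + ρ * d i ∧ α i + ρ * d i ≤ C) ∧
      (∑ i, y i * (α i + ρ * d i) = 0) ∧
      Θ (α + ρ • d) < Θ α := by
  -- basic facts about d
  have hdw : ∀ w : Fin n → ℝ, d ⬝ᵥ w = y l * w l - y u * w u := by
    intro w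
    simp [hd, dotProduct, sub_mul, Finset.sum_sub_distrib, Pi.single_apply, mul_assoc, ite_mul]
  have hdl : d l = y l := by
    simp [hd, Pi.single_apply, hlu.symm]
    intro h; exact absurd h hlu
  have hdu : d u = -y u := by
    simp [hd, Pi.single_apply, hlu]
    intro h; exact absurd h.symm hlu
  have hdother : ∀ i, i ≠ l → i ≠ u → d i = 0 := by
    intro i h1 h2
    simp [hd, Pi.single_apply, h1, h2]
  set g : Fin n → ℝ := Q.mulVec α - s with hg
  set v : ℝ := y u * g u - y l * g l with hv
  set K : ℝ := d ⬝ᵥ Q.mulVec d with hK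
  set bl : ℝ := if y l = 1 then C - α l else α l with hbl
  set bu : ℝ := if y u = 1 then α u else C - α u with hbu
  have hbl0 : 0 < bl := by
    rcases hl with ⟨h1, h2⟩ | ⟨h1, h2⟩
    · simp [hbl, h2]; linarith
    · have : y l ≠ 1 := by rw [h2]; norm_num
      simp [hbl, this]; exact h1
  have hbu0 : 0 < bu := by
    rcases hu with ⟨h1, h2⟩ | ⟨h1, h2⟩
    · have : y u ≠ 1 := by rw [h2]; norm_num
      simp [hbu, this]; linarith
    · simp [hbu, h2]; exact h1
  have hv0 : 0 < v := hviol
  refine ⟨min (min bl bu) (v / (|K| + 1)), ?_, ?_⟩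
  · have : 0 < v / (|K| + 1) := div_pos hv0 (by positivity)
    exact lt_min (lt_min hbl0 hbu0) this
  intro ρ hρ0 hρbar
  have hρbl : ρ ≤ bl := le_trans hρbar (le_trans (min_le_left _ _) (min_le_left _ _))
  have hρbu : ρ ≤ bu := le_trans hρbar (le_trans (min_le_left _ _) (min_le_right _ _))
  have hρK : ρ ≤ v / (|K| + 1) := le_trans hρbar (min_le_right _ _)
  refine ⟨?_, ?_, ?_⟩
  · intro i
    by_cases hil : i = l
    · subst hil
      rcases hl with ⟨h1, h2⟩ | ⟨h1, h2⟩
      · rw [hbl, if_pos h2] at hρbl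
        rw [hdl, h2]
        constructor
        · have := (hbox i).1; linarith
        · linarith
      · have hne : y i ≠ 1 := by rw [h2]; norm_num
        rw [hbl, if_neg hne] at hρbl
        rw [hdl, h2]
        constructor
        · linarith
        · have := (hbox i).2; linarith
    · by_cases hiu : i = u
      · subst hiu
        rcases hu with ⟨h1, h2⟩ | ⟨h1, h2⟩
        · have hne : y i ≠ 1 := by rw [h2]; norm_num
          rw [hbu, if_neg hne] at hρbu
          rw [hdu, h2]
          constructor
          · have := (hbox i).1; linarith
          · linarith
        · rw [hbu, if_pos h2] at hρbu
          rw [hdu, h2]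
          constructor
          · linarith
          · have := (hbox i).2; linarith
      · rw [hdother i hil hiu, mul_zero, add_zero]
        exact hbox i
  · have hyd : ∑ i, y i * d i = 0 := by
      have : ∑ i, y i * d i = d ⬝ᵥ y := by
        simp [dotProduct, mul_comm]
      rw [this, hdw]
      have h1 : y l * y l = 1 := by rcases hy l with h | h <;> rw [h] <;> norm_num
      have h2 : y u * y u = 1 := by rcases hy u with h | h <;> rw [h] <;> norm_num
      rw [h1, h2]; ring
    have : ∑ i, y i * (α i + ρ * d i) = ∑ i, y i * α i + ρ * ∑ i, y i * d i := by
      rw [Finset.mul_sum, ← Finset.sum_add_distrib]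
      congr 1; ext i; ring
    rw [this, heq, hyd]; ring
  · -- descent
    have hsymm : α ⬝ᵥ Q.mulVec d = d ⬝ᵥ Q.mulVec α := by
      rw [dotProduct_mulVec, ← Matrix.mulVec_transpose, hQ.eq, dotProduct_comm]
    have hexp : Θ (α + ρ • d) = Θ α + ρ * (d ⬝ᵥ g) + ρ ^ 2 / 2 * K := by
      rw [hΘ, hΘ]
      have hdg : d ⬝ᵥ g = d ⬝ᵥ Q.mulVec α - d ⬝ᵥ s := by
        rw [hg]; simp [dotProduct_sub]
      rw [hdg, hK]
      simp only [Matrix.mulVec_add, Matrix.mulVec_smul, dotProduct_add, add_dotProduct,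
        smul_dotProduct, dotProduct_smul, smul_eq_mul]
      rw [hsymm, dotProduct_comm s d]
      ring
    rw [hexp]
    have hdgv : d ⬝ᵥ g = -v := by rw [hdw, hv]; ring
    rw [hdgv]
    have hKle : ρ * K ≤ ρ * |K| := by
      apply mul_le_mul_of_nonneg_left (le_abs_self K) hρ0.le
    have h1 : ρ * |K| < v := by
      calc ρ * |K| ≤ (v / (|K| + 1)) * |K| := by
              apply mul_le_mul_of_nonneg_right hρK (abs_nonneg K)
        _ < v := by
              rw [div_mul_eq_mul_div, div_lt_iff₀ (by positivity)]
              nlinarith [abs_nonneg K, hv0]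
    nlinarith [sq_nonneg ρ, hρ0, hv0]
end

section
/- Let Q be a symmetric positive semidefinite n×n real matrix, s, α ∈ ℝⁿ, g = Qα − s, and d, p_prev ∈ ℝⁿ with gᵀp_prev = 0, dᵀQd > 0 and p_prevᵀQp_prev > 0. Let γ* = −(dᵀQp_prev)/(p_prevᵀQp_prev), p = d + γ* p_prev, assume pᵀQp > 0, and let ρ* = −(gᵀd)/(pᵀQp). If κ > 0 satisfies dᵀQd ≤ 1/(2κ), then the unclipped conjugate SMO iteration gains at least κ times the squared directional derivative: Θ(α) − Θ(α + ρ* p) ≥ κ (gᵀd)². -/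
open Matrix

/-- For Q symmetric PSD, g = Qα − s, gᵀp_prev = 0, dᵀQd > 0,
p_prevᵀQp_prev > 0, γ* = −(dᵀQp_prev)/(p_prevᵀQp_prev), p = d + γ* p_prev with
pᵀQp > 0 and ρ* = −(gᵀd)/(pᵀQp): if κ > 0 satisfies dᵀQd ≤ 1/(2κ), then
Θ(α) − Θ(α + ρ*p) ≥ κ (gᵀd)². -/
theorem csmo_gain_lower_bound
    {n : ℕ} (Q : Matrix (Fin n) (Fin n) ℝ) (hQ : Q.PosSemidef)
    (s α : Fin n → ℝ)
    (Θ : (Fin n → ℝ) → ℝ)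
    (hΘ : ∀ β, Θ β = (1 / 2) * (β ⬝ᵥ Q.mulVec β) - s ⬝ᵥ β)
    (g : Fin n → ℝ) (hg : g = Q.mulVec α - s)
    (d pprev : Fin n → ℝ) (horth : g ⬝ᵥ pprev = 0)
    (hd : 0 < d ⬝ᵥ Q.mulVec d) (hpprev : 0 < pprev ⬝ᵥ Q.mulVec pprev)
    (γstar : ℝ) (hγ : γstar = -(d ⬝ᵥ Q.mulVec pprev) / (pprev ⬝ᵥ Q.mulVec pprev))
    (p : Fin n → ℝ) (hp : p = d + γstar • pprev) (hpQp : 0 < p ⬝ᵥ Q.mulVec p)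
    (ρstar : ℝ) (hρ : ρstar = -(g ⬝ᵥ d) / (p ⬝ᵥ Q.mulVec p))
    (κ : ℝ) (hκ : 0 < κ) (hbound : d ⬝ᵥ Q.mulVec d ≤ 1 / (2 * κ)) :
    κ * (g ⬝ᵥ d) ^ 2 ≤ Θ α - Θ (α + ρstar • p) := by
  have hQt : Qᵀ = Q := by simpa using hQ.1.eq
  have hsym : ∀ x y : Fin n → ℝ, x ⬝ᵥ Q.mulVec y = y ⬝ᵥ Q.mulVec x := by
    intro x y
    rw [dotProduct_mulVec, dotProduct_comm, ← mulVec_transpose, hQt]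
  set t := g ⬝ᵥ d with ht
  set A := p ⬝ᵥ Q.mulVec p with hA
  have hgp : g ⬝ᵥ p = t := by
    rw [hp, dotProduct_add, dotProduct_smul, horth, smul_eq_mul, mul_zero, add_zero]
  set c := d ⬝ᵥ Q.mulVec pprev with hc
  set b := pprev ⬝ᵥ Q.mulVec pprev with hb
  have hAle : A ≤ d ⬝ᵥ Q.mulVec d := by
    have hexp : A = d ⬝ᵥ Q.mulVec d + 2 * γstar * c + γstar ^ 2 * b := by
      rw [hA, hp]
      simp only [mulVec_add, dotProduct_add, add_dotProduct, smul_dotProduct,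
        mulVec_smul, dotProduct_smul, smul_eq_mul, hsym pprev d, ← hc, ← hb]
      ring
    have hkey : 2 * γstar * c + γstar ^ 2 * b = -(c ^ 2) / b := by
      rw [hγ]; field_simp; ring
    have hneg : -(c ^ 2) / b ≤ 0 := by
      apply div_nonpos_of_nonpos_of_nonneg <;> [simp [sq_nonneg]; exact le_of_lt hpprev]
    linarith [hexp, hkey, hneg]
  have hA2κ : A ≤ 1 / (2 * κ) := le_trans hAle hbound
  have hgain : Θ α - Θ (α + ρstar • p) = t ^ 2 / (2 * A) := by
    have hαp : α ⬝ᵥ Q.mulVec p - s ⬝ᵥ p = t := by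
      have h1 : (Q.mulVec α) ⬝ᵥ p = α ⬝ᵥ Q.mulVec p := by rw [dotProduct_comm, hsym]
      rw [← hgp, hg, sub_dotProduct, h1]
    have hsp : s ⬝ᵥ p = α ⬝ᵥ Q.mulVec p - t := by linarith
    rw [hΘ, hΘ]
    have hexp : (α + ρstar • p) ⬝ᵥ Q.mulVec (α + ρstar • p)
        = α ⬝ᵥ Q.mulVec α + 2 * ρstar * (α ⬝ᵥ Q.mulVec p) + ρstar ^ 2 * A := by
      simp only [mulVec_add, dotProduct_add, add_dotProduct, smul_dotProduct,
        mulVec_smul, dotProduct_smul, smul_eq_mul, hsym p α, ← hA]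
      ring
    rw [hexp, dotProduct_add, dotProduct_smul, hρ, hsp, smul_eq_mul]
    have hAne : A ≠ 0 := ne_of_gt hpQp
    field_simp
    ring
  rw [hgain, le_div_iff₀ (by positivity)]
  have h1 : 2 * κ * A ≤ 1 := by
    rw [le_div_iff₀ (by positivity)] at hA2κ
    nlinarith
  nlinarith [mul_nonneg (sq_nonneg t) (by linarith : (0:ℝ) ≤ 1 - 2 * κ * A)]
end
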